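/- Let 0 < γ ≤ 1 be a constant and let K ⊂ ℝ^d be a convex body in γ-canonical form. Let x ∈ K be a point at distance δ from ∂K, where δ ≤ Δ₀ = (1/2)(γ²/(4d))^d. Then for every direction v ∈ normals(M′(x)), width_v(shadow(M′(x))) ≤ (8/(3γ))·δ. -/

import Mathlib

open scoped RealInnerProductSpace

/-- The Macbeath region `M^λ(x) = x + λ((K − x) ∩ (x − K))` of a convex body `K ⊆ ℝ^d`
at a point `x`, with scaling factor `λ`. `M′(x) = M^{1/5}(x)`. -/
def Mreg {d : ℕ} (K : Set (EuclideanSpace ℝ (Fin d))) (x : EuclideanSpace ℝ (Fin d))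
    (l : ℝ) : Set (EuclideanSpace ℝ (Fin d)) :=
  {z | ∃ y, x + y ∈ K ∧ x - y ∈ K ∧ z = x + l • y}

/-- The shadow of a region `R ⊆ K` with respect to `K` (and the origin `O`): the set of
points `z ∈ K` such that the segment `Oz` intersects `R`. -/
def shadowOf {d : ℕ} (K R : Set (EuclideanSpace ℝ (Fin d))) :
    Set (EuclideanSpace ℝ (Fin d)) :=
  {z ∈ K | ∃ t : ℝ, 0 ≤ t ∧ t ≤ 1 ∧ t • z ∈ R}

/-- `normals(R)`: the set of outward unit normals of hyperplanes supporting `K` at some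
point of `shadow(R)`. -/
def normalsOf {d : ℕ} (K R : Set (EuclideanSpace ℝ (Fin d))) :
    Set (EuclideanSpace ℝ (Fin d)) :=
  {v | ‖v‖ = 1 ∧ ∃ p ∈ shadowOf K R, ∀ z ∈ K, ⟪v, z⟫ ≤ ⟪v, p⟫}

/-- The directional width of a set `S` in direction `v`: `width_v(S) = sup_{p,q∈S} ⟪v, p−q⟫`. -/
noncomputable def dirWidth {d : ℕ} (v : EuclideanSpace ℝ (Fin d))
    (S : Set (EuclideanSpace ℝ (Fin d))) : ℝ :=
  sSup {r : ℝ | ∃ p ∈ S, ∃ q ∈ S, r = ⟪v, p - q⟫}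

set_option maxHeartbeats 1000000

/-- Let `0 < γ ≤ 1` be a constant and `K ⊆ ℝ^d` a convex body in
γ-canonical form. Let `x ∈ K` be at distance `δ ≤ Δ₀ = (1/2)(γ²/(4d))^d` from `∂K`.
Then for every `v ∈ normals(M′(x))`, `width_v(shadow(M′(x))) ≤ (8/(3γ))·δ`. -/
theorem stmt10 {d : ℕ} (γ : ℝ) (hγ0 : 0 < γ) (hγ1 : γ ≤ 1)
    (K : Set (EuclideanSpace ℝ (Fin d)))
    (hK : Convex ℝ K) (hKc : IsCompact K) (hKi : (interior K).Nonempty)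
    (hcan₁ : Metric.closedBall (0 : EuclideanSpace ℝ (Fin d)) (γ / 2) ⊆ K)
    (hcan₂ : K ⊆ Metric.closedBall (0 : EuclideanSpace ℝ (Fin d)) (1 / 2))
    (x : EuclideanSpace ℝ (Fin d)) (hx : x ∈ K) (δ : ℝ)
    (hδ : Metric.infDist x (frontier K) = δ)
    (hδ0 : δ ≤ 1 / 2 * (γ ^ 2 / (4 * (d : ℝ))) ^ d)
    (v : EuclideanSpace ℝ (Fin d)) (hv : v ∈ normalsOf K (Mreg K x (1 / 5))) :
    dirWidth v (shadowOf K (Mreg K x (1 / 5))) ≤ 8 / (3 * γ) * δ := by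
  obtain ⟨hv1, p, hp, hpmax⟩ := hv
  obtain ⟨hpK, t, ht0, ht1, htp⟩ := hp
  obtain ⟨y, hy1, hy2, hy3⟩ := htp
  have hδnn : 0 ≤ δ := by
    have := Metric.infDist_nonneg (x := x) (s := frontier K)
    rw [hδ] at this; exact this
  have hd : 0 < d := by
    rcases Nat.eq_zero_or_pos d with hd0 | hd
    · exfalso
      subst hd0
      have hv0 : v = 0 := by ext i; exact i.elim0
      rw [hv0, norm_zero] at hv1
      norm_num at hv1
    · exact hd
  have hδle : δ ≤ γ ^ 2 / 8 := by
    have hd1 : (1:ℝ) ≤ d := by exact_mod_cast hd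
    have hbase : γ ^ 2 / (4 * (d:ℝ)) ≤ γ ^ 2 / 4 :=
      div_le_div_of_nonneg_left (by positivity) (by norm_num) (by linarith)
    have h2 : (γ ^ 2 / (4 * (d:ℝ))) ^ d ≤ (γ ^ 2 / 4) ^ d :=
      pow_le_pow_left₀ (by positivity) hbase d
    have h3 : (γ ^ 2 / 4) ^ d ≤ (γ ^ 2 / 4) ^ 1 :=
      pow_le_pow_of_le_one (by positivity) (by nlinarith) hd
    rw [pow_one] at h3
    linarith
  have hmemK : ∀ z ∈ K, ‖z‖ ≤ 1/2 := fun z hz => by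
    simpa [Metric.mem_closedBall, dist_zero_right] using hcan₂ hz
  have hKball : ∀ w : EuclideanSpace ℝ (Fin d), ‖w‖ = 1 → (γ/2) • w ∈ K := by
    intro w hw
    apply hcan₁
    rw [Metric.mem_closedBall, dist_zero_right, norm_smul, hw, mul_one, Real.norm_eq_abs,
      abs_of_nonneg (by positivity)]
  have hγh : γ/2 ≤ ⟪v, p⟫ := by
    have := hpmax ((γ/2) • v) (hKball v hv1)
    rwa [real_inner_smul_right, real_inner_self_eq_norm_sq, hv1, one_pow, mul_one] at this
  have hh12 : ⟪v, p⟫ ≤ 1/2 := by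
    calc ⟪v, p⟫ ≤ ‖v‖ * ‖p‖ := real_inner_le_norm v p
    _ = ‖p‖ := by rw [hv1, one_mul]
    _ ≤ 1/2 := hmemK p hpK
  have hah : ⟪v, x⟫ ≤ ⟪v, p⟫ := hpmax x hx
  have hyv1 : ⟪v, y⟫ ≤ ⟪v, p⟫ - ⟪v, x⟫ := by
    have h1 := hpmax _ hy1
    rw [inner_add_right] at h1
    linarith
  have hyv2 : -(⟪v, p⟫ - ⟪v, x⟫) ≤ ⟪v, y⟫ := by
    have h2 := hpmax _ hy2
    rw [inner_sub_right] at h2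
    linarith
  have htp_v : t * ⟪v, p⟫ = ⟪v, x⟫ + 1/5 * ⟪v, y⟫ := by
    have h0 : ⟪v, t • p⟫ = ⟪v, x + (1/5 : ℝ) • y⟫ := by rw [hy3]
    rwa [real_inner_smul_right, inner_add_right, real_inner_smul_right] at h0
  -- frontier point nearest to x, and a supporting functional there
  have hKuniv : K ≠ Set.univ := by
    intro hK'
    have hmem : EuclideanSpace.single (⟨0, hd⟩ : Fin d) (1:ℝ) ∈ K := hK' ▸ Set.mem_univ _
    have := hmemK _ hmem
    rw [EuclideanSpace.norm_single] at this
    norm_num at this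
  have hfront : (frontier K).Nonempty := by
    rw [nonempty_frontier_iff]
    exact ⟨⟨x, hx⟩, hKuniv⟩
  have hfc : IsCompact (frontier K) :=
    hKc.of_isClosed_subset isClosed_frontier (frontier_subset_iff_isClosed.mpr hKc.isClosed)
  obtain ⟨z', hz'f, hz'd⟩ := hfc.exists_infDist_eq_dist hfront x
  have hz'notint : z' ∉ interior K := hz'f.2
  obtain ⟨f, hf⟩ := geometric_hahn_banach_open_point hK.interior isOpen_interior hz'notint
  obtain ⟨a₀, ha₀⟩ := hKi
  have hfK : ∀ z ∈ K, f z ≤ f z' := by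
    intro z hz
    have hc : Continuous fun l : ℝ => f ((1 - l) • a₀ + l • z) := by fun_prop
    have hlim : Filter.Tendsto (fun l : ℝ => f ((1 - l) • a₀ + l • z))
        (nhdsWithin 1 (Set.Iio 1)) (nhds (f z)) := by
      have h1 : f ((1 - (1:ℝ)) • a₀ + (1:ℝ) • z) = f z := by norm_num
      have h2 := hc.tendsto 1
      rw [h1] at h2
      exact h2.mono_left nhdsWithin_le_nhds
    apply le_of_tendsto hlim
    filter_upwards [Ioo_mem_nhdsLT_of_mem (by norm_num : (1:ℝ) ∈ Set.Ioc 0 1)] with l hl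
    exact (hf _ (hK.combo_interior_closure_mem_interior ha₀ (subset_closure hz)
      (by linarith [hl.2]) hl.1.le (by ring))).le
  have hfa₀ : f a₀ < f z' := hf a₀ ha₀
  obtain ⟨w, hwz⟩ : ∃ w : EuclideanSpace ℝ (Fin d), ∀ z, ⟪w, z⟫ = f z :=
    ⟨(InnerProductSpace.toDual ℝ (EuclideanSpace ℝ (Fin d))).symm f,
      fun z => InnerProductSpace.toDual_symm_apply⟩
  have hwne : w ≠ 0 := by
    intro h0
    have h1 := hwz a₀
    have h2 := hwz z'
    rw [h0, inner_zero_left] at h1 h2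
    rw [← h1, ← h2] at hfa₀
    exact lt_irrefl 0 hfa₀
  have hwpos : (0:ℝ) < ‖w‖ := norm_pos_iff.mpr hwne
  have hnu : ‖(‖w‖⁻¹ • w : EuclideanSpace ℝ (Fin d))‖ = 1 := by
    rw [norm_smul, norm_inv, norm_norm, inv_mul_cancel₀ (ne_of_gt hwpos)]
  set u : EuclideanSpace ℝ (Fin d) := ‖w‖⁻¹ • w with hudef
  have husup : ∀ z ∈ K, ⟪u, z⟫ ≤ ⟪u, z'⟫ := by
    intro z hz
    rw [hudef, real_inner_smul_left, real_inner_smul_left, hwz, hwz]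
    exact mul_le_mul_of_nonneg_left (hfK z hz) (by positivity)
  have hβγ : γ/2 ≤ ⟪u, z'⟫ := by
    have := husup _ (hKball u hnu)
    rwa [real_inner_smul_right, real_inner_self_eq_norm_sq, hnu, one_pow, mul_one] at this
  have hbβ : ⟪u, z'⟫ - ⟪u, x⟫ ≤ δ := by
    have h2 : ⟪u, z' - x⟫ ≤ ‖u‖ * ‖z' - x‖ := real_inner_le_norm _ _
    have h3 : ‖z' - x‖ = δ := by rw [← dist_eq_norm, dist_comm, ← hz'd, hδ]
    rw [inner_sub_right, h3, hnu, one_mul] at h2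
    linarith
  have huy1 : ⟪u, y⟫ ≤ δ := by
    have h1 := husup _ hy1
    rw [inner_add_right] at h1
    linarith
  have huy2 : -δ ≤ ⟪u, y⟫ := by
    have h2 := husup _ hy2
    rw [inner_sub_right] at h2
    linarith
  have htp_u : t * ⟪u, p⟫ = ⟪u, x⟫ + 1/5 * ⟪u, y⟫ := by
    have h0 : ⟪u, t • p⟫ = ⟪u, x + (1/5 : ℝ) • y⟫ := by rw [hy3]
    rwa [real_inner_smul_right, inner_add_right, real_inner_smul_right] at h0
  have ht_u : t * ⟪u, p⟫ ≤ t * ⟪u, z'⟫ := mul_le_mul_of_nonneg_left (husup p hpK) ht0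
  have h1t : (1 - t) * ⟪u, z'⟫ ≤ 6/5 * δ := by nlinarith [htp_u, ht_u, huy2, hbβ]
  have e1 : ⟪v, p⟫ - t * ⟪v, p⟫ ≤ (1 - t) / 2 := by
    nlinarith [mul_nonneg (show (0:ℝ) ≤ 1 - t by linarith)
      (show (0:ℝ) ≤ 1/2 - ⟪v, p⟫ by linarith)]
  have h1t' : 8/5 * (⟪v, p⟫ - ⟪v, x⟫) ≤ 1 - t := by linarith [htp_v, hyv1, e1]
  have e2 : (1 - t) * (γ/2) ≤ (1 - t) * ⟪u, z'⟫ :=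
    mul_le_mul_of_nonneg_left hβγ (by linarith)
  have hkey : γ * (⟪v, p⟫ - ⟪v, x⟫) ≤ 3/2 * δ := by
    nlinarith [mul_le_mul_of_nonneg_right h1t' (show (0:ℝ) ≤ γ/2 by positivity), e2, h1t]
  have hha : ⟪v, p⟫ - ⟪v, x⟫ ≤ 3*γ/16 := by
    have hmul : γ * (⟪v, p⟫ - ⟪v, x⟫) ≤ γ * (3*γ/16) := by nlinarith [hδle]
    exact le_of_mul_le_mul_left hmul hγ0
  have haγ : 5*γ/16 ≤ ⟪v, x⟫ := by linarith
  have hlow : ∀ z ∈ shadowOf K (Mreg K x (1/5)),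
      ⟪v, x⟫ - (⟪v, p⟫ - ⟪v, x⟫)/5 ≤ ⟪v, z⟫ := by
    rintro z ⟨hzK, s, hs0, hs1, hsm⟩
    obtain ⟨y', hy'1, hy'2, hy'3⟩ := hsm
    have hsz : s * ⟪v, z⟫ = ⟪v, x⟫ + 1/5 * ⟪v, y'⟫ := by
      have h0 : ⟪v, s • z⟫ = ⟪v, x + (1/5 : ℝ) • y'⟫ := by rw [hy'3]
      rwa [real_inner_smul_right, inner_add_right, real_inner_smul_right] at h0
    have hy'v : -(⟪v, p⟫ - ⟪v, x⟫) ≤ ⟪v, y'⟫ := by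
      have h2 := hpmax _ hy'2
      rw [inner_sub_right] at h2
      linarith
    have hm : 0 < ⟪v, x⟫ - (⟪v, p⟫ - ⟪v, x⟫)/5 := by linarith
    have hs : 0 < s * ⟪v, z⟫ := by rw [hsz]; linarith
    have hspos : 0 < s := by
      rcases hs0.lt_or_eq with h' | h'
      · exact h'
      · rw [← h', zero_mul] at hs; exact absurd hs (lt_irrefl 0)
    have hzpos : 0 < ⟪v, z⟫ := by nlinarith
    have hle : s * ⟪v, z⟫ ≤ ⟪v, z⟫ := by nlinarith
    linarith
  rw [dirWidth]
  apply Real.sSup_le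
  · rintro r ⟨z₁, hz₁, z₂, hz₂, rfl⟩
    have h1 : ⟪v, z₁⟫ ≤ ⟪v, p⟫ := hpmax z₁ hz₁.1
    have h2 := hlow z₂ hz₂
    rw [inner_sub_right, div_mul_eq_mul_div, le_div_iff₀ (show (0:ℝ) < 3*γ by linarith)]
    nlinarith [hkey, hδnn, mul_le_mul_of_nonneg_right
      (show ⟪v, z₁⟫ - ⟪v, z₂⟫ ≤ 6/5*(⟪v, p⟫ - ⟪v, x⟫) by linarith)
      (show (0:ℝ) ≤ 3*γ by linarith)]
  · exact mul_nonneg (by positivity) hδnn
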